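/- Fix a real p with p ≥ 1, and for I ∈ (0,1) define the spiking period T_p(I) = ∫_{−1}^{1} dy / ((1−I)·|y|^p + I) of the monomial phase model with threshold 1 and reset −1. Then T_p(I) tends to infinity as I → 0⁺; equivalently the onset firing rate vanishes: lim_{I→0⁺} 1/T_p(I) = 0, so the F-I curve is continuous at I = 0. -/

import Mathlib

open Filter

section aux

lemma aux_glower_tendsto :
    Tendsto (fun I : ℝ => Real.log (1 + I) - Real.log I) (nhdsWithin 0 (Set.Ioi 0)) atTop := by
  have h1 : Tendsto (fun I : ℝ => Real.log (1 + I)) (nhdsWithin 0 (Set.Ioi 0)) (nhds 0) := by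
    have hc : ContinuousAt (fun I : ℝ => Real.log (1 + I)) 0 := by
      have h : (1 : ℝ) + 0 ≠ 0 := by norm_num
      exact (Real.continuousAt_log h).comp (by fun_prop)
    simpa using hc.continuousWithinAt.tendsto
  have h2 : Tendsto (fun I : ℝ => -Real.log I) (nhdsWithin 0 (Set.Ioi 0)) atTop :=
    tendsto_neg_atBot_atTop.comp Real.tendsto_log_nhdsGT_zero
  simpa [sub_eq_add_neg] using h1.add_atTop h2

-- integrability of the main integrand
lemma aux_integrable (p I : ℝ) (hp : 0 < p) (hI : 0 < I) (hI1 : I < 1) (a b : ℝ) :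
    IntervalIntegrable (fun y : ℝ => 1 / ((1 - I) * |y| ^ p + I)) MeasureTheory.volume a b := by
  have hden : Continuous fun y : ℝ => (1 - I) * |y| ^ p + I := by
    have : Continuous fun y : ℝ => |y| ^ p :=
      continuous_abs.rpow_const fun x => Or.inr hp.le
    fun_prop
  have hpos : ∀ y : ℝ, (1 - I) * |y| ^ p + I ≠ 0 := by
    intro y
    have h1 : (0:ℝ) ≤ (1 - I) * |y| ^ p :=
      mul_nonneg (by linarith) (Real.rpow_nonneg (abs_nonneg y) p)
    positivity
  exact (continuous_const.div hden hpos).intervalIntegrable a b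

lemma aux_lower (p I : ℝ) (hp : 1 ≤ p) (hI : 0 < I) (hI1 : I < 1) :
    Real.log (1 + I) - Real.log I ≤
      ∫ y in (-1 : ℝ)..1, 1 / ((1 - I) * |y| ^ p + I) := by
  have hp0 : (0:ℝ) < p := by linarith
  have hint := aux_integrable p I hp0 hI hI1
  have hint01 : IntervalIntegrable (fun y : ℝ => 1 / (y + I)) MeasureTheory.volume 0 1 := by
    apply ContinuousOn.intervalIntegrable
    apply ContinuousOn.div continuousOn_const (by fun_prop)
    intro x hx
    rw [Set.uIcc_of_le (by norm_num : (0:ℝ) ≤ 1)] at hx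
    nlinarith [hx.1]
  -- step 1: the simple integral computes to log(1+I) - log I
  have hcomp : (∫ y in (0:ℝ)..1, 1 / (y + I)) = Real.log (1 + I) - Real.log I := by
    have := intervalIntegral.integral_comp_add_right (a := (0:ℝ)) (b := 1)
      (fun x => 1 / x) I
    have h0 : (0:ℝ) ∉ Set.uIcc I (1 + I) := by
      rw [Set.uIcc_of_le (by linarith : I ≤ 1 + I)]
      intro h
      exact absurd h.1 (by linarith)
    rw [this, zero_add, integral_one_div h0,
      Real.log_div (by linarith) (by linarith)]
  -- step 2: pointwise comparison on [0,1]
  have hmono : (∫ y in (0:ℝ)..1, 1 / (y + I)) ≤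
      ∫ y in (0:ℝ)..1, 1 / ((1 - I) * |y| ^ p + I) := by
    apply intervalIntegral.integral_mono_on (by norm_num) hint01 (hint 0 1)
    intro x hx
    obtain ⟨hx0, hx1⟩ := hx
    have habs : |x| = x := abs_of_nonneg hx0
    have hxp : x ^ p ≤ x := by
      rcases eq_or_lt_of_le hx0 with h | h
      · rw [← h, Real.zero_rpow (by linarith)]
      · calc x ^ p ≤ x ^ (1:ℝ) := Real.rpow_le_rpow_of_exponent_ge h hx1 hp
          _ = x := Real.rpow_one x
    have hden_le : (1 - I) * |x| ^ p + I ≤ x + I := by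
      have h1 : (1 - I) * |x| ^ p ≤ 1 * |x| ^ p :=
        mul_le_mul_of_nonneg_right (by linarith) (Real.rpow_nonneg (abs_nonneg x) p)
      rw [habs] at h1 ⊢
      nlinarith
    have hden_pos : (0:ℝ) < (1 - I) * |x| ^ p + I := by
      have h1 : (0:ℝ) ≤ (1 - I) * |x| ^ p :=
        mul_nonneg (by linarith) (Real.rpow_nonneg (abs_nonneg x) p)
      linarith
    exact one_div_le_one_div_of_le hden_pos hden_le
  -- step 3: extend interval from [0,1] to [-1,1]
  have hext : (∫ y in (0:ℝ)..1, 1 / ((1 - I) * |y| ^ p + I)) ≤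
      ∫ y in (-1 : ℝ)..1, 1 / ((1 - I) * |y| ^ p + I) := by
    apply intervalIntegral.integral_mono_interval (by norm_num) (by norm_num) (le_refl 1)
    · filter_upwards with y
      have h1 : (0:ℝ) ≤ (1 - I) * |y| ^ p :=
        mul_nonneg (by linarith) (Real.rpow_nonneg (abs_nonneg y) p)
      positivity
    · exact hint (-1) 1
  linarith [hcomp ▸ hmono]

end aux

/-- Fix a real `p ≥ 1`, and for `I ∈ (0,1)` define the spiking
period `T_p I = ∫ y in -1..1, 1 / ((1 - I) * |y|^p + I)` of the monomial phase
model with threshold `1` and reset `-1`.  Then `T_p I → ∞` as `I → 0⁺`;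
equivalently the onset firing rate vanishes, `lim_{I→0⁺} 1 / T_p I = 0`, so
the F-I curve `r I = 1 / T_p I` for `I > 0` (with `r I = 0` for `I ≤ 0`) is
continuous at `I = 0`. -/
theorem monomial_phase_onset_rate_zero
    (p : ℝ) (hp : 1 ≤ p)
    (T : ℝ → ℝ)
    (hT : ∀ I : ℝ, T I = ∫ y in (-1 : ℝ)..1, 1 / ((1 - I) * |y| ^ p + I))
    (r : ℝ → ℝ) (hr : ∀ I : ℝ, r I = if 0 < I then 1 / T I else 0) :
    Tendsto T (nhdsWithin 0 (Set.Ioi 0)) atTop ∧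
      Tendsto (fun I : ℝ => 1 / T I) (nhdsWithin 0 (Set.Ioi 0)) (nhds 0) ∧
      ContinuousAt r 0 := by
  have hTtop : Tendsto T (nhdsWithin 0 (Set.Ioi 0)) atTop := by
    apply tendsto_atTop_mono' _ _ aux_glower_tendsto
    have hmem : Set.Ioo (0:ℝ) 1 ∈ nhdsWithin (0:ℝ) (Set.Ioi 0) :=
      Ioo_mem_nhdsGT (by norm_num)
    filter_upwards [hmem] with I hI
    rw [hT I]
    exact aux_lower p I hp hI.1 hI.2
  have hrate : Tendsto (fun I : ℝ => 1 / T I) (nhdsWithin 0 (Set.Ioi 0)) (nhds 0) := by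
    simpa [one_div, Pi.inv_def] using hTtop.inv_tendsto_atTop
  refine ⟨hTtop, hrate, ?_⟩
  have hr0 : r 0 = 0 := by rw [hr 0]; norm_num
  rw [ContinuousAt, hr0]
  have hsup : Tendsto r (nhdsWithin 0 (Set.Iic 0) ⊔ nhdsWithin 0 (Set.Ioi 0)) (nhds 0) := by
    rw [tendsto_sup]
    constructor
    · apply Tendsto.congr' _ tendsto_const_nhds
      filter_upwards [self_mem_nhdsWithin] with I (hI : I ≤ 0)
      rw [hr I, if_neg (by linarith)]
    · apply Tendsto.congr' _ hrate
      filter_upwards [self_mem_nhdsWithin] with I (hI : I ∈ Set.Ioi (0:ℝ))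
      rw [hr I, if_pos (Set.mem_Ioi.mp hI)]
  rwa [nhdsLE_sup_nhdsGT] at hsup
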